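/- Let $F$ be a finite field with $q$ elements, $n \geq 1$, $1 \leq r \leq n$, and, for $\alpha \in F$, let $Y_{n,r}^{\alpha}$ denote the set of $n \times n$ matrices over $F$ of rank $r$ with $(1,1)$-entry equal to $\alpha$. Then $|Y_{n,r}^{0}| - |Y_{n,r}^{1}| = q^r |M(n-1,n-1,r,q)| - q^{r-1} |M(n-1,n-1,r-1,q)|$, where $|M(m,m,s,q)|$ is the number of $m \times m$ matrices of rank $s$ over $F$. -/

import Mathlib

open Matrix

variable {F : Type} [Field F]

lemma myrange_prodMap {R M M₂ M₃ M₄ : Type*} [CommRing R] [AddCommGroup M] [AddCommGroup M₂]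
    [AddCommGroup M₃] [AddCommGroup M₄] [Module R M] [Module R M₂] [Module R M₃] [Module R M₄]
    (f : M →ₗ[R] M₂) (g : M₃ →ₗ[R] M₄) :
    LinearMap.range (f.prodMap g) = (LinearMap.range f).prod (LinearMap.range g) := by
  ext ⟨x, y⟩
  constructor
  · rintro ⟨⟨a, b⟩, h⟩
    rw [LinearMap.prodMap_apply, Prod.mk.injEq] at h
    exact ⟨⟨a, h.1⟩, ⟨b, h.2⟩⟩
  · rintro ⟨⟨a, rfl⟩, ⟨b, rfl⟩⟩; exact ⟨(a, b), rfl⟩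

noncomputable def prodSubEquiv {R M N : Type*} [CommRing R] [AddCommGroup M] [AddCommGroup N]
    [Module R M] [Module R N] (p : Submodule R M) (q : Submodule R N) :
    (p.prod q) ≃ₗ[R] p × q where
  toFun x := (⟨x.1.1, x.2.1⟩, ⟨x.1.2, x.2.2⟩)
  invFun x := ⟨(x.1.1, x.2.1), ⟨x.1.2, x.2.2⟩⟩
  map_add' _ _ := rfl
  map_smul' _ _ := rfl
  left_inv _ := rfl
  right_inv _ := rfl

lemma finrank_prod_submodule {M N : Type*} [AddCommGroup M] [AddCommGroup N]
    [Module F M] [Module F N] [FiniteDimensional F M] [FiniteDimensional F N]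
    (p : Submodule F M) (q : Submodule F N) :
    Module.finrank F (p.prod q) = Module.finrank F p + Module.finrank F q := by
  rw [LinearEquiv.finrank_eq (prodSubEquiv p q), Module.finrank_prod]

lemma rank_fromBlocks_diag {n₁ n₂ m₁ m₂ : Type*} [Fintype n₁] [Fintype n₂] [Fintype m₁] [Fintype m₂]
    (A : Matrix n₁ m₁ F) (D : Matrix n₂ m₂ F) :
    (fromBlocks A 0 0 D).rank = A.rank + D.rank := by
  classical
  let e₁ := LinearEquiv.sumArrowLequivProdArrow m₁ m₂ F F
  let e₂ := LinearEquiv.sumArrowLequivProdArrow n₁ n₂ F F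
  have key : (fromBlocks A 0 0 D).mulVecLin =
      (e₂.symm.toLinearMap.comp ((A.mulVecLin.prodMap D.mulVecLin).comp e₁.toLinearMap)) := by
    apply LinearMap.ext; intro v
    have hv : v = Sum.elim (v ∘ Sum.inl) (v ∘ Sum.inr) := (Sum.elim_comp_inl_inr v).symm
    simp only [LinearMap.comp_apply, mulVecLin_apply, LinearEquiv.coe_coe]
    rw [hv, fromBlocks_mulVec]
    simp [e₁, e₂, LinearEquiv.sumArrowLequivProdArrow]
    rfl
  rw [Matrix.rank, key, LinearMap.range_comp, LinearMap.range_comp,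
    LinearEquiv.range, Submodule.map_top, LinearEquiv.finrank_map_eq,
    myrange_prodMap, finrank_prod_submodule]
  rfl

open scoped Classical in
lemma rank_one_by_one (t : F) :
    (Matrix.of (fun (_ : Fin 1) (_ : Fin 1) => t)).rank = if t = 0 then 0 else 1 := by
  split_ifs with h
  · subst h
    have : (Matrix.of (fun (_ : Fin 1) (_ : Fin 1) => (0:F))) = (0 : Matrix (Fin 1) (Fin 1) F) := by
      ext i j; rfl
    rw [this, Matrix.rank_zero]
  · have hdet : IsUnit (Matrix.of (fun (_ : Fin 1) (_ : Fin 1) => t)).det := by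
      rw [Matrix.det_fin_one]
      exact (isUnit_iff_ne_zero).mpr h
    have := Matrix.rank_mul_eq_left_of_isUnit_det (Matrix.of (fun (_ : Fin 1) (_ : Fin 1) => t))
      (1 : Matrix (Fin 1) (Fin 1) F) hdet
    rw [Matrix.one_mul] at this
    rw [this, Matrix.rank_one, Fintype.card_fin]

def Mtx {m : ℕ} (a : F) (b c : Fin m → F) (D : Matrix (Fin m) (Fin m) F) :
    Matrix (Fin 1 ⊕ Fin m) (Fin 1 ⊕ Fin m) F :=
  fromBlocks (Matrix.of fun _ _ => a) (Matrix.of fun _ j => b j) (Matrix.of fun i _ => c i) D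

open scoped Classical in
lemma rank_Mtx_both {m : ℕ} (a : F) (b c y z : Fin m → F) (D : Matrix (Fin m) (Fin m) F)
    (hb : b = vecMul y D) (hc : c = D.mulVec z) :
    (Mtx a b c D).rank = D.rank + (if a = y ⬝ᵥ c then 0 else 1) := by
  set L : Matrix (Fin 1 ⊕ Fin m) (Fin 1 ⊕ Fin m) F :=
    fromBlocks 1 (Matrix.of fun _ j => y j) 0 1 with hL
  set R : Matrix (Fin 1 ⊕ Fin m) (Fin 1 ⊕ Fin m) F :=
    fromBlocks 1 0 (Matrix.of fun i _ => z i) 1 with hR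
  set N : Matrix (Fin 1 ⊕ Fin m) (Fin 1 ⊕ Fin m) F :=
    fromBlocks (Matrix.of fun _ _ => (a - y ⬝ᵥ c)) 0 0 D with hN
  have h1 : (Matrix.of fun (_ : Fin 1) j => y j) * D = (Matrix.of fun (_ : Fin 1) j => b j) := by
    ext i j; simp [Matrix.mul_apply, hb, Matrix.vecMul, dotProduct]
  have h2 : D * (Matrix.of fun i (_ : Fin 1) => z i) = (Matrix.of fun i (_ : Fin 1) => c i) := by
    ext i j; simp [Matrix.mul_apply, hc, Matrix.mulVec, dotProduct]
  have h3 : (Matrix.of fun (_ : Fin 1) j => b j) * (Matrix.of fun i (_ : Fin 1) => z i)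
      = Matrix.of fun (_ : Fin 1) (_ : Fin 1) => (y ⬝ᵥ c) := by
    ext i j
    show b ⬝ᵥ z = y ⬝ᵥ c
    rw [hb, hc, Matrix.dotProduct_mulVec]
  have h4 : (Matrix.of fun (_ : Fin 1) (_ : Fin 1) => (a - y ⬝ᵥ c)) +
      (Matrix.of fun (_ : Fin 1) (_ : Fin 1) => (y ⬝ᵥ c)) =
      (Matrix.of fun (_ : Fin 1) (_ : Fin 1) => a) := by
    ext i j; show (a - y ⬝ᵥ c) + y ⬝ᵥ c = a; ring
  have hM : Mtx a b c D = L * N * R := by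
    rw [hL, hN, hR, fromBlocks_multiply]
    simp only [Matrix.one_mul, Matrix.mul_one, Matrix.zero_mul, Matrix.mul_zero, add_zero,
      zero_add]
    rw [fromBlocks_multiply]
    simp only [Matrix.one_mul, Matrix.mul_one, Matrix.zero_mul, Matrix.mul_zero, add_zero,
      zero_add]
    rw [h1, h3, h2, h4]
    rfl
  have hdetL : IsUnit L.det := by
    rw [hL, det_fromBlocks_zero₂₁, det_one, det_one, one_mul]; exact isUnit_one
  have hdetR : IsUnit R.det := by
    rw [hR, det_fromBlocks_zero₁₂, det_one, det_one, one_mul]; exact isUnit_one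
  rw [hM, Matrix.rank_mul_eq_left_of_isUnit_det R (L * N) hdetR,
    Matrix.rank_mul_eq_right_of_isUnit_det L N hdetL, hN, rank_fromBlocks_diag,
    rank_one_by_one]
  rw [sub_eq_zero]
  exact add_comm _ _

lemma finrank_span_sup {V : Type*} [AddCommGroup V] [Module F V] [FiniteDimensional F V]
    (v : V) (W : Submodule F V) (hv : v ∉ W) :
    Module.finrank F ↥(Submodule.span F {v} ⊔ W) = Module.finrank F W + 1 := by
  have hvne : v ≠ 0 := fun h => hv (h ▸ W.zero_mem)
  have hdisj : Submodule.span F {v} ⊓ W = ⊥ := by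
    rw [eq_bot_iff]
    rintro x ⟨hx1, hx2⟩
    obtain ⟨t, rfl⟩ := Submodule.mem_span_singleton.mp hx1
    rcases eq_or_ne t 0 with rfl | ht
    · simp
    · exact absurd (by simpa [smul_smul, inv_mul_cancel₀ ht] using W.smul_mem t⁻¹ hx2) hv
  have := Submodule.finrank_sup_add_finrank_inf_eq (Submodule.span F {v}) W
  rw [hdisj, finrank_bot, add_zero, finrank_span_singleton hvne] at this
  omega

lemma rank_Mtx_col_indep {m : ℕ} (a a' : F) (b c : Fin m → F) (D : Matrix (Fin m) (Fin m) F)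
    (hc : ¬ ∃ z, c = D.mulVec z) :
    (Mtx a b c D).rank = (Mtx a' b c D).rank := by
  set M₁ : Matrix (Fin 1 ⊕ Fin m) (Fin m) F :=
    Matrix.of (fun i j => Sum.elim (fun _ => b j) (fun i' => D i' j) i) with hM₁
  have key : ∀ a : F, (Mtx a b c D).rank =
      Module.finrank F ↥(LinearMap.range M₁.mulVecLin) + 1 := by
    intro a
    rw [rank_eq_finrank_span_cols]
    have hT : (Mtx a b c D)ᵀ =
        Sum.elim (fun _ : Fin 1 => Sum.elim (fun _ : Fin 1 => a) c) M₁ᵀ := by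
      funext j
      rcases j with j | j <;> funext i <;> rcases i with i | i <;> rfl
    rw [show (Mtx a b c D).col = (Mtx a b c D)ᵀ from rfl]
    rw [hT]
    erw [Set.Sum.elim_range]
    rw [Submodule.span_union, Set.range_const]
    erw [← Matrix.range_mulVecLin M₁]
    have hv : Sum.elim (fun _ : Fin 1 => a) c ∉ LinearMap.range M₁.mulVecLin := by
      rintro ⟨x, hx⟩
      apply hc
      refine ⟨x, funext fun i => ?_⟩
      have := congrFun hx (Sum.inr i)
      simpa [Matrix.mulVecLin_apply, Matrix.mulVec, dotProduct, hM₁] using this.symm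
    exact finrank_span_sup _ _ hv
  rw [key a, key a']

lemma rank_Mtx_row_indep {m : ℕ} (a a' : F) (b c : Fin m → F) (D : Matrix (Fin m) (Fin m) F)
    (hb : ¬ ∃ y, b = vecMul y D) :
    (Mtx a b c D).rank = (Mtx a' b c D).rank := by
  have hT : ∀ x : F, (Mtx x b c D)ᵀ = Mtx x c b Dᵀ := by
    intro x
    unfold Mtx
    rw [fromBlocks_transpose]
    congr 1 <;> ext i j <;> rfl
  have hb' : ¬ ∃ z, b = Dᵀ.mulVec z := by
    rintro ⟨z, hz⟩
    exact hb ⟨z, by rw [hz, Matrix.mulVec_transpose]⟩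
  rw [← Matrix.rank_transpose (Mtx a b c D), ← Matrix.rank_transpose (Mtx a' b c D), hT, hT]
  exact rank_Mtx_col_indep a a' c b Dᵀ hb'

open scoped Classical

section Counting
variable [Fintype F]

lemma card_colSet {m : ℕ} (D : Matrix (Fin m) (Fin m) F) :
    (Finset.univ.filter (fun c : Fin m → F => ∃ z, c = D.mulVec z)).card
      = Fintype.card F ^ D.rank := by
  rw [← Fintype.card_subtype]
  have e : {c : Fin m → F // ∃ z, c = D.mulVec z} ≃ ↥(LinearMap.range D.mulVecLin) :=
    Equiv.subtypeEquivRight (fun c => by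
      simp only [LinearMap.mem_range, Matrix.mulVecLin_apply]
      exact ⟨fun ⟨z, h⟩ => ⟨z, h.symm⟩, fun ⟨z, h⟩ => ⟨z, h.symm⟩⟩)
  rw [Fintype.card_congr e, Matrix.rank]
  exact Module.card_eq_pow_finrank (K := F)

lemma card_fiber_eq {m : ℕ} (D : Matrix (Fin m) (Fin m) F) (y b : Fin m → F)
    (hb : b = vecMul y D) (hbne : b ≠ 0) (α β : F) :
    (Finset.univ.filter (fun c : Fin m → F => (∃ z, c = D.mulVec z) ∧ y ⬝ᵥ c = α)).card =
    (Finset.univ.filter (fun c : Fin m → F => (∃ z, c = D.mulVec z) ∧ y ⬝ᵥ c = β)).card := by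
  obtain ⟨j, hj⟩ : ∃ j, b j ≠ 0 := by
    by_contra h
    push_neg at h
    exact hbne (funext h)
  set z₀ : Fin m → F := Pi.single j ((β - α) * (b j)⁻¹) with hz₀
  set c₀ : Fin m → F := D.mulVec z₀ with hc₀
  have hyc₀ : y ⬝ᵥ c₀ = β - α := by
    rw [hc₀, Matrix.dotProduct_mulVec, ← hb, hz₀, dotProduct_single]
    field_simp
  apply Finset.card_bij' (fun c _ => c + c₀) (fun c _ => c - c₀)
  · intro c hc
    simp only [Finset.mem_filter, Finset.mem_univ, true_and] at hc ⊢
    obtain ⟨⟨z, rfl⟩, h2⟩ := hc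
    refine ⟨⟨z + z₀, by rw [Matrix.mulVec_add]⟩, ?_⟩
    rw [dotProduct_add, h2, hyc₀]; ring
  · intro c hc
    simp only [Finset.mem_filter, Finset.mem_univ, true_and] at hc ⊢
    obtain ⟨⟨z, rfl⟩, h2⟩ := hc
    refine ⟨⟨z - z₀, by rw [Matrix.mulVec_sub]⟩, ?_⟩
    rw [dotProduct_sub, h2, hyc₀]; ring
  · intro c _; ring
  · intro c _; ring

end Counting

section Counting2
variable [Fintype F]

lemma sum_ite_cancel {γ : Type*} (s : Finset γ) (g : γ → F) (u v : ℤ)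
    (h : (s.filter (fun x => g x = 0)).card = (s.filter (fun x => g x = 1)).card) :
    ∑ x ∈ s, ((if g x = 0 then u else v) - (if g x = 1 then u else v)) = 0 := by
  have key : ∀ x ∈ s, ((if g x = 0 then u else v) - (if g x = 1 then u else v)) =
      (if g x = 0 then u - v else 0) + (if g x = 1 then v - u else 0) := by
    intro x _
    by_cases h0 : g x = 0 <;> by_cases h1 : g x = 1
    · rw [h0] at h1; exact absurd h1.symm one_ne_zero
    · simp [h0, h1]
    · simp [h0, h1]
    · simp [h0, h1]
  rw [Finset.sum_congr rfl key, Finset.sum_add_distrib, ← Finset.sum_filter, ← Finset.sum_filter,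
    Finset.sum_const, Finset.sum_const, h]
  simp only [nsmul_eq_mul]
  ring

lemma sum_c_eq_zero {m : ℕ} (r : ℕ) (D : Matrix (Fin m) (Fin m) F) (b : Fin m → F)
    (hbne : b ≠ 0) :
    ∑ c : Fin m → F, ((if (Mtx (0:F) b c D).rank = r then (1:ℤ) else 0) -
      (if (Mtx (1:F) b c D).rank = r then (1:ℤ) else 0)) = 0 := by
  by_cases hbrow : ∃ y, b = vecMul y D
  · obtain ⟨y, hy⟩ := hbrow
    have hterm : ∀ c : Fin m → F, (∃ z, c = D.mulVec z) →
        ((if (Mtx (0:F) b c D).rank = r then (1:ℤ) else 0) -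
          (if (Mtx (1:F) b c D).rank = r then (1:ℤ) else 0)) =
        ((if y ⬝ᵥ c = 0 then (if D.rank = r then (1:ℤ) else 0)
            else (if D.rank + 1 = r then (1:ℤ) else 0)) -
          (if y ⬝ᵥ c = 1 then (if D.rank = r then (1:ℤ) else 0)
            else (if D.rank + 1 = r then (1:ℤ) else 0))) := by
      intro c ⟨z, hz⟩
      rw [rank_Mtx_both 0 b c y z D hy hz, rank_Mtx_both 1 b c y z D hy hz]
      by_cases h0 : y ⬝ᵥ c = 0 <;> by_cases h1 : y ⬝ᵥ c = 1
      · rw [h0] at h1; exact absurd h1.symm one_ne_zero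
      · rw [h0]; norm_num
      · rw [h1]; norm_num
      · have n0 : (0:F) ≠ y ⬝ᵥ c := fun h => h0 h.symm
        have n1 : (1:F) ≠ y ⬝ᵥ c := fun h => h1 h.symm
        simp [n0, n1, h0, h1]
    have hzero : ∀ c : Fin m → F, ¬ (∃ z, c = D.mulVec z) →
        ((if (Mtx (0:F) b c D).rank = r then (1:ℤ) else 0) -
          (if (Mtx (1:F) b c D).rank = r then (1:ℤ) else 0)) = 0 := by
      intro c hc
      rw [rank_Mtx_col_indep 0 1 b c D hc]
      ring
    rw [← Finset.sum_filter_add_sum_filter_not Finset.univ (fun c => ∃ z, c = D.mulVec z)]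
    rw [Finset.sum_eq_zero (fun c hc => hzero c (Finset.mem_filter.mp hc).2), add_zero]
    rw [Finset.sum_congr rfl (fun c hc => hterm c (Finset.mem_filter.mp hc).2)]
    apply sum_ite_cancel
    simp only [Finset.filter_filter]
    exact card_fiber_eq D y b hy hbne 0 1
  · apply Finset.sum_eq_zero
    intro c _
    rw [rank_Mtx_row_indep 0 1 b c D hbrow]
    ring


lemma sum_c_b_zero {m : ℕ} (r : ℕ) (D : Matrix (Fin m) (Fin m) F) :
    ∑ c : Fin m → F, ((if (Mtx (0:F) 0 c D).rank = r then (1:ℤ) else 0) -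
      (if (Mtx (1:F) 0 c D).rank = r then (1:ℤ) else 0)) =
    ((if D.rank = r then (1:ℤ) else 0) - (if D.rank + 1 = r then (1:ℤ) else 0))
      * (Fintype.card F : ℤ) ^ D.rank := by
  have hy : (0 : Fin m → F) = vecMul 0 D := by rw [Matrix.zero_vecMul]
  have hterm : ∀ c : Fin m → F,
      ((if (Mtx (0:F) 0 c D).rank = r then (1:ℤ) else 0) -
        (if (Mtx (1:F) 0 c D).rank = r then (1:ℤ) else 0)) =
      if (∃ z, c = D.mulVec z) then
        ((if D.rank = r then (1:ℤ) else 0) - (if D.rank + 1 = r then (1:ℤ) else 0)) else 0 := by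
    intro c
    by_cases hc : ∃ z, c = D.mulVec z
    · obtain ⟨z, hz⟩ := hc
      rw [rank_Mtx_both 0 0 c 0 z D hy hz, rank_Mtx_both 1 0 c 0 z D hy hz,
        if_pos (⟨z, hz⟩ : ∃ z, c = D.mulVec z)]
      rw [zero_dotProduct]
      norm_num
    · rw [rank_Mtx_col_indep 0 1 0 c D hc, if_neg hc]
      ring
  rw [Finset.sum_congr rfl (fun c _ => hterm c), Finset.sum_ite, Finset.sum_const_zero,
    add_zero, Finset.sum_const, card_colSet, nsmul_eq_mul]
  push_cast
  ring

lemma sum_bc {m : ℕ} (r : ℕ) (D : Matrix (Fin m) (Fin m) F) :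
    ∑ b : Fin m → F, ∑ c : Fin m → F,
      ((if (Mtx (0:F) b c D).rank = r then (1:ℤ) else 0) -
        (if (Mtx (1:F) b c D).rank = r then (1:ℤ) else 0)) =
    ((if D.rank = r then (1:ℤ) else 0) - (if D.rank + 1 = r then (1:ℤ) else 0))
      * (Fintype.card F : ℤ) ^ D.rank := by
  rw [Finset.sum_eq_single_of_mem (0 : Fin m → F) (Finset.mem_univ _)
    (fun b _ hb => sum_c_eq_zero r D b hb)]
  exact sum_c_b_zero r D

lemma sum_all {m : ℕ} (r : ℕ) (hr : 1 ≤ r) :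
    ∑ D : Matrix (Fin m) (Fin m) F, ∑ b : Fin m → F, ∑ c : Fin m → F,
      ((if (Mtx (0:F) b c D).rank = r then (1:ℤ) else 0) -
        (if (Mtx (1:F) b c D).rank = r then (1:ℤ) else 0)) =
    (Fintype.card F : ℤ) ^ r *
        (Finset.univ.filter (fun D : Matrix (Fin m) (Fin m) F => D.rank = r)).card -
      (Fintype.card F : ℤ) ^ (r - 1) *
        (Finset.univ.filter (fun D : Matrix (Fin m) (Fin m) F => D.rank = r - 1)).card := by
  have hterm : ∀ D : Matrix (Fin m) (Fin m) F,
      ((if D.rank = r then (1:ℤ) else 0) - (if D.rank + 1 = r then (1:ℤ) else 0))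
        * (Fintype.card F : ℤ) ^ D.rank =
      (if D.rank = r then (Fintype.card F : ℤ) ^ r else 0) -
        (if D.rank = r - 1 then (Fintype.card F : ℤ) ^ (r - 1) else 0) := by
    intro D
    by_cases h1 : D.rank = r
    · have h2 : ¬ D.rank = r - 1 := by omega
      have h3 : ¬ D.rank + 1 = r := by omega
      have h4 : ¬ r = r - 1 := by omega
      simp [h1, h2, h3, h4]
    · by_cases h2 : D.rank = r - 1
      · have h3 : D.rank + 1 = r := by omega
        have h4 : ¬ r - 1 = r := by omega
        have h5 : r - 1 + 1 = r := by omega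
        simp [h1, h2, h3, h4, h5]
      · have h3 : ¬ D.rank + 1 = r := by omega
        simp [h1, h2, h3]
  rw [Finset.sum_congr rfl (fun D _ => (sum_bc r D).trans (hterm D)), Finset.sum_sub_distrib,
    ← Finset.sum_filter, ← Finset.sum_filter, Finset.sum_const, Finset.sum_const,
    nsmul_eq_mul, nsmul_eq_mul]
  ring

end Counting2

section Main
variable [Fintype F]

lemma card_Y {m : ℕ} (hn : 1 ≤ 1 + m) (r : ℕ) (α : F) :
    (Nat.card {X : Matrix (Fin (1+m)) (Fin (1+m)) F //
        X.rank = r ∧ X ⟨0, hn⟩ ⟨0, hn⟩ = α} : ℤ)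
      = ∑ D : Matrix (Fin m) (Fin m) F, ∑ b : Fin m → F, ∑ c : Fin m → F,
          (if (Mtx α b c D).rank = r then (1:ℤ) else 0) := by
  set e : (Fin 1 ⊕ Fin m) ≃ Fin (1+m) := finSumFinEquiv with he
  have hzero : e (Sum.inl 0) = ⟨0, hn⟩ := rfl
  have key : ∀ X : Matrix (Fin (1+m)) (Fin (1+m)) F,
      X.submatrix e e = Mtx (X ⟨0,hn⟩ ⟨0,hn⟩)
        (fun j => X.submatrix e e (.inl 0) (.inr j))
        (fun i => X.submatrix e e (.inr i) (.inl 0))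
        (Matrix.of fun i j => X.submatrix e e (.inr i) (.inr j)) := by
    intro X
    ext i j
    rcases i with i | i <;> rcases j with j | j
    · have hi : i = 0 := Subsingleton.elim _ _
      have hj : j = 0 := Subsingleton.elim _ _
      subst hi; subst hj
      rfl
    · have hi : i = 0 := Subsingleton.elim _ _
      subst hi; rfl
    · have hj : j = 0 := Subsingleton.elim _ _
      subst hj; rfl
    · rfl
  have equiv1 : {X : Matrix (Fin (1+m)) (Fin (1+m)) F //
        X.rank = r ∧ X ⟨0, hn⟩ ⟨0, hn⟩ = α} ≃
      {p : (Fin m → F) × (Fin m → F) × Matrix (Fin m) (Fin m) F //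
        (Mtx α p.1 p.2.1 p.2.2).rank = r} := by
    refine ⟨fun X => ⟨(fun j => X.1.submatrix e e (.inl 0) (.inr j),
                       fun i => X.1.submatrix e e (.inr i) (.inl 0),
                       Matrix.of fun i j => X.1.submatrix e e (.inr i) (.inr j)), ?_⟩,
            fun p => ⟨(Mtx α p.1.1 p.1.2.1 p.1.2.2).submatrix e.symm e.symm, ?_, ?_⟩, ?_, ?_⟩
    · have hk := key X.1
      rw [X.2.2] at hk
      rw [← hk, Matrix.rank_submatrix]
      exact X.2.1
    · rw [Matrix.rank_submatrix]
      exact p.2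
    · show (Mtx α p.1.1 p.1.2.1 p.1.2.2) (e.symm ⟨0, hn⟩) (e.symm ⟨0, hn⟩) = α
      have : e.symm ⟨0, hn⟩ = Sum.inl 0 := by rw [← hzero, Equiv.symm_apply_apply]
      rw [this]
      rfl
    · intro X
      apply Subtype.ext
      show (Mtx α _ _ _).submatrix e.symm e.symm = X.1
      have hk := key X.1
      rw [X.2.2] at hk
      rw [← hk, Matrix.submatrix_submatrix, Equiv.self_comp_symm,
        Matrix.submatrix_id_id]
    · intro p
      apply Subtype.ext
      refine Prod.ext ?_ (Prod.ext ?_ ?_)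
      · funext j
        show (Mtx α p.1.1 p.1.2.1 p.1.2.2) (e.symm (e (.inl 0))) (e.symm (e (.inr j))) = _
        rw [Equiv.symm_apply_apply, Equiv.symm_apply_apply]
        rfl
      · funext i
        show (Mtx α p.1.1 p.1.2.1 p.1.2.2) (e.symm (e (.inr i))) (e.symm (e (.inl 0))) = _
        rw [Equiv.symm_apply_apply, Equiv.symm_apply_apply]
        rfl
      · ext i j
        show (Mtx α p.1.1 p.1.2.1 p.1.2.2) (e.symm (e (.inr i))) (e.symm (e (.inr j))) = _
        rw [Equiv.symm_apply_apply, Equiv.symm_apply_apply]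
        rfl
  rw [Nat.card_congr equiv1, Nat.card_eq_fintype_card, Fintype.card_subtype]
  have hcast : ((Finset.univ.filter
      (fun p : (Fin m → F) × (Fin m → F) × Matrix (Fin m) (Fin m) F =>
        (Mtx α p.1 p.2.1 p.2.2).rank = r)).card : ℤ)
      = ∑ p : (Fin m → F) × (Fin m → F) × Matrix (Fin m) (Fin m) F,
          if (Mtx α p.1 p.2.1 p.2.2).rank = r then (1:ℤ) else 0 := by
    rw [Finset.card_filter, Nat.cast_sum]
    exact Finset.sum_congr rfl (fun p _ => by split_ifs <;> simp)
  rw [hcast, Fintype.sum_prod_type]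
  have hswap : ∀ b : Fin m → F, ∑ q : (Fin m → F) × Matrix (Fin m) (Fin m) F,
      (if (Mtx α b q.1 q.2).rank = r then (1:ℤ) else 0)
      = ∑ D : Matrix (Fin m) (Fin m) F, ∑ c : Fin m → F,
          (if (Mtx α b c D).rank = r then (1:ℤ) else 0) := by
    intro b
    rw [Fintype.sum_prod_type]
    exact Finset.sum_comm
  rw [Finset.sum_congr rfl (fun b _ => hswap b)]
  exact Finset.sum_comm

end Main

lemma card_rank_congr {m m' : ℕ} (h : m' = m) (s : ℕ) :
    Nat.card {X : Matrix (Fin m') (Fin m') F // X.rank = s} =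
      Nat.card {X : Matrix (Fin m) (Fin m) F // X.rank = s} := by
  subst h; rfl

/-- `|Y_{n,r}^0| - |Y_{n,r}^1| = q^r |M(n-1,n-1,r,q)| - q^{r-1} |M(n-1,n-1,r-1,q)|`. -/
theorem stmt4 (F : Type) [Field F] [Fintype F] (q : ℕ) (hq : q = Fintype.card F)
    (n r : ℕ) (hn : 1 ≤ n) (hr : 1 ≤ r) (hrn : r ≤ n) :
    (Nat.card {X : Matrix (Fin n) (Fin n) F // X.rank = r ∧ X ⟨0, hn⟩ ⟨0, hn⟩ = 0} : ℤ) -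
      (Nat.card {X : Matrix (Fin n) (Fin n) F // X.rank = r ∧ X ⟨0, hn⟩ ⟨0, hn⟩ = 1} : ℤ) =
      (q : ℤ) ^ r * Nat.card {X : Matrix (Fin (n - 1)) (Fin (n - 1)) F // X.rank = r} -
      (q : ℤ) ^ (r - 1) * Nat.card {X : Matrix (Fin (n - 1)) (Fin (n - 1)) F // X.rank = r - 1} := by
  subst hq
  obtain ⟨m, rfl⟩ : ∃ m, n = 1 + m := ⟨n - 1, by omega⟩
  have hm : 1 + m - 1 = m := by omega
  rw [card_rank_congr (F := F) hm r, card_rank_congr (F := F) hm (r - 1)]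
  rw [card_Y hn r 0, card_Y hn r 1, ← Finset.sum_sub_distrib]
  simp_rw [← Finset.sum_sub_distrib]
  rw [sum_all r hr]
  have hNat : ∀ s : ℕ, (Nat.card {X : Matrix (Fin m) (Fin m) F // X.rank = s}) =
      (Finset.univ.filter (fun D : Matrix (Fin m) (Fin m) F => D.rank = s)).card := fun s => by
    rw [Nat.card_eq_fintype_card, Fintype.card_subtype]
  rw [hNat r, hNat (r-1)]
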